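/- The kernel of a fair bisimulation function is a ∀-fair bisimulation relation: if f is a fair bisimulation function from a fair transition system (X, A, →, F_X) to (Y, A, →, F_Y), then R = {(x, x') ∈ X × X : f(x) = f(x')} is an equivalence relation satisfying: (1) if x →^a x' and x R y, then there exists y' with y →^a y' and x' R y'; and (2) if p and q are infinite executions with equal domain that are pointwise R-related on finite prefixes, and p is fair, then q is fair. -/

import Mathlib

variable {X Y A : Type}

/-- Finite execution: `s` lists the states along the trace `σ`. -/
def IsExec {X A : Type} (tr : X → A → X → Prop) (σ : List A) (s : List X) : Prop :=
  s.length = σ.length + 1 ∧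
  ∀ i (hi : i + 1 < s.length) (hσ : i < σ.length),
    tr (s[i]'(Nat.lt_of_succ_lt hi)) (σ[i]'hσ) (s[i + 1]'hi)

/-- Infinite execution along the infinite trace `σ` (states at finite prefixes). -/
def IsInfExec {X A : Type} (tr : X → A → X → Prop) (σ : ℕ → A) (p : ℕ → X) : Prop :=
  ∀ i, tr (p i) (σ i) (p (i + 1))

/-- Prefix order on finite executions. -/
def FinLE {X A : Type} (e e' : List A × List X) : Prop :=
  e.1 <+: e'.1 ∧ e.2 <+: e'.2

/-- A finite execution is a prefix of an infinite execution. -/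
def FinLEInf {X A : Type} (e : List A × List X) (σ : ℕ → A) (p : ℕ → X) : Prop :=
  (∀ i (h : i < e.1.length), e.1[i] = σ i) ∧ (∀ i (h : i < e.2.length), e.2[i] = p i)

/-- Elements of `fexec X`: finite executions or infinite (fair) executions. -/
def GExec (X A : Type) : Type := (List A × List X) ⊕ ((ℕ → A) × (ℕ → X))

/-- The prefix order on `fexec X`. -/
def GLE {X A : Type} : GExec X A → GExec X A → Prop
  | .inl e, .inl e' => FinLE e e'
  | .inl e, .inr i => FinLEInf e i.1 i.2
  | .inr i, .inr i' => i = i'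
  | .inr _, .inl _ => False

/-- Membership in `fexec X` = finite executions together with *fair* infinite
executions. -/
def GValid {X A : Type} (tr : X → A → X → Prop) (F : (ℕ → A) → (ℕ → X) → Prop) :
    GExec X A → Prop
  | .inl e => IsExec tr e.1 e.2
  | .inr i => IsInfExec tr i.1 i.2 ∧ F i.1 i.2

/-- `g` is the supremum in `fexec X` of the chain `c` of finite executions. -/
def IsSupOf {X A : Type} (tr : X → A → X → Prop) (F : (ℕ → A) → (ℕ → X) → Prop)
    (c : ℕ → List A × List X) (g : GExec X A) : Prop :=
  GValid tr F g ∧ (∀ i, GLE (.inl (c i)) g) ∧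
  ∀ g', GValid tr F g' → (∀ i, GLE (.inl (c i)) g') → GLE g g'

/-- Postcomposition with `f` on (finite or infinite) executions. -/
def gmap {X Y A : Type} (f : X → Y) : GExec X A → GExec Y A
  | .inl e => .inl (e.1, e.2.map f)
  | .inr i => .inr (i.1, f ∘ i.2)

/-- Fair simulation function: preserves transitions and fairness. -/
def FairSim {X Y A : Type} (trX : X → A → X → Prop) (trY : Y → A → Y → Prop)
    (FX : (ℕ → A) → (ℕ → X) → Prop) (FY : (ℕ → A) → (ℕ → Y) → Prop)
    (f : X → Y) : Prop :=
  (∀ x a x', trX x a x' → trY (f x) a (f x')) ∧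
  (∀ σ p, IsInfExec trX σ p → FX σ p → FY σ (f ∘ p))

/-- Fair bisimulation function: a surjective fair simulation reflecting
transitions and satisfying the Kleene equality
`⊔ᵢ (f ∘ pᵢ) ≈ f ∘ ⊔ᵢ pᵢ` for increasing chains of finite executions. -/
def FairBisimFn {X Y A : Type} (trX : X → A → X → Prop) (trY : Y → A → Y → Prop)
    (FX : (ℕ → A) → (ℕ → X) → Prop) (FY : (ℕ → A) → (ℕ → Y) → Prop)
    (f : X → Y) : Prop :=
  Function.Surjective f ∧ FairSim trX trY FX FY f ∧
  (∀ x a y, trY (f x) a y → ∃ x', trX x a x' ∧ f x' = y) ∧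
  ∀ c : ℕ → List A × List X,
    (∀ i, IsExec trX (c i).1 (c i).2) → (∀ i, FinLE (c i) (c (i + 1))) →
    (((∃ g, IsSupOf trY FY (fun i => ((c i).1, (c i).2.map f)) g) ↔
        (∃ g, IsSupOf trX FX c g)) ∧
      ∀ g, IsSupOf trX FX c g →
        IsSupOf trY FY (fun i => ((c i).1, (c i).2.map f)) (gmap f g))


/-- Chain of prefixes of an infinite execution. -/
def prefChain {X A : Type} (σ : ℕ → A) (q : ℕ → X) (i : ℕ) : List A × List X :=
  (List.map σ (List.range i), List.map q (List.range (i + 1)))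

lemma prefChain_isExec {X A : Type} {trX : X → A → X → Prop} {σ : ℕ → A} {q : ℕ → X}
    (hq : IsInfExec trX σ q) (i : ℕ) :
    IsExec trX (prefChain σ q i).1 (prefChain σ q i).2 := by
  refine ⟨by simp [prefChain], ?_⟩
  intro k hk hσ
  simp only [prefChain, List.getElem_map, List.getElem_range]
  exact hq k

lemma prefChain_mono {X A : Type} (σ : ℕ → A) (q : ℕ → X) (i : ℕ) :
    FinLE (prefChain σ q i) (prefChain σ q (i + 1)) := by
  constructor <;>
  · apply List.IsPrefix.map
    exact ⟨[_], (List.range_succ).symm⟩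

/-- Any valid upper bound of the prefix chain is the infinite execution itself,
which is in particular fair. -/
lemma ub_of_prefChain {X A : Type} {σ : ℕ → A} {q : ℕ → X} {g : GExec X A}
    (hub : ∀ i, GLE (.inl (prefChain σ q i)) g) :
    g = .inr (σ, q) := by
  cases g with
  | inl e =>
    have h := (hub (e.2.length)).2
    have := h.length_le
    simp [prefChain] at this
  | inr i =>
    obtain ⟨σ', p'⟩ := i
    have hσ : σ' = σ := by
      funext k
      have h := (hub (k + 1)).1 k (by simp only [prefChain, List.length_map, List.length_range]; omega)
      simpa [prefChain] using h.symm
    have hp : p' = q := by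
      funext k
      have h := (hub (k + 1)).2 k (by simp only [prefChain, List.length_map, List.length_range]; omega)
      simpa [prefChain] using h.symm
    rw [hσ, hp]

lemma prefChain_le {X A : Type} (σ : ℕ → A) (q : ℕ → X) (i : ℕ) :
    GLE (.inl (prefChain σ q i)) (.inr (σ, q) : GExec X A) := by
  constructor <;> intro k hk <;> simp [prefChain] at hk ⊢

lemma isSupOf_prefChain {X A : Type} {trX : X → A → X → Prop}
    {F : (ℕ → A) → (ℕ → X) → Prop} {σ : ℕ → A} {q : ℕ → X}
    (hq : IsInfExec trX σ q) (hF : F σ q) :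
    IsSupOf trX F (prefChain σ q) (.inr (σ, q)) := by
  refine ⟨⟨hq, hF⟩, prefChain_le σ q, ?_⟩
  intro g' _ hub
  rw [ub_of_prefChain hub]
  rfl

/-- the kernel of a fair bisimulation function is a ∀-fair
bisimulation relation: an equivalence relation transferring transitions and
fairness of pointwise-related infinite executions. -/
theorem kernel_of_fair_bisim_is_forall_fair_bisim
    (trX : X → A → X → Prop) (trY : Y → A → Y → Prop)
    (FX : (ℕ → A) → (ℕ → X) → Prop) (FY : (ℕ → A) → (ℕ → Y) → Prop)
    (f : X → Y) (hf : FairBisimFn trX trY FX FY f) :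
    Equivalence (fun x x' : X => f x = f x') ∧
    (∀ x x' y a, trX x a x' → f x = f y →
      ∃ y', trX y a y' ∧ f x' = f y') ∧
    (∀ (σ : ℕ → A) (p q : ℕ → X), IsInfExec trX σ p → IsInfExec trX σ q →
      (∀ i, f (p i) = f (q i)) → FX σ p → FX σ q) := by
  obtain ⟨hsurj, ⟨hsim, hfair⟩, hrefl, hsup⟩ := hf
  refine ⟨⟨fun _ => rfl, Eq.symm, Eq.trans⟩, ?_, ?_⟩
  · intro x x' y a hx hxy
    have h : trY (f y) a (f x') := hxy ▸ hsim x a x' hx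
    obtain ⟨y', hy', hfy'⟩ := hrefl y a (f x') h
    exact ⟨y', hy', hfy'.symm⟩
  · intro σ p q hp hq hpq hFp
    have hmapeq : (fun i => ((prefChain σ p i).1, (prefChain σ p i).2.map f)) =
        (fun i => ((prefChain σ q i).1, (prefChain σ q i).2.map f)) := by
      funext i
      simp only [prefChain, List.map_map]
      congr 1
      apply List.map_congr_left
      intro k _
      exact hpq k
    have hsp := hsup (prefChain σ p) (prefChain_isExec hp) (prefChain_mono σ p)
    have hsq := hsup (prefChain σ q) (prefChain_isExec hq) (prefChain_mono σ q)
    have hY : ∃ g, IsSupOf trY FY (fun i => ((prefChain σ q i).1, (prefChain σ q i).2.map f)) g := by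
      rw [← hmapeq]
      exact ⟨_, hsp.2 _ (isSupOf_prefChain hp hFp)⟩
    obtain ⟨g, hg⟩ := hsq.1.mp hY
    have := ub_of_prefChain hg.2.1
    subst this
    exact hg.1.2
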